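/- For every finite digraph D with root r, the collection F = { E(F) : F is a subgraph of D which is an r-flame } forms a greedoid on E(D); i.e., the empty edge set is in F, and whenever F₀, F₁ ∈ F with |F₀| < |F₁|, there exists e ∈ F₁\F₀ with F₀ + e ∈ F. -/

import Mathlib

attribute [local instance] Classical.propDecidable

/-- A finite digraph: edges `E` with tail and head maps (parallel edges allowed). -/
structure Digraph' (V E : Type) where
  tail : E → V
  head : E → V

namespace Digraph'

variable {V E : Type} [Fintype V] [Fintype E]

/-- `es` is a directed walk from `r` to `v`. -/
def IsWalk (D : Digraph' V E) : V → V → List E → Prop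
  | r, v, [] => r = v
  | r, v, e :: es => D.tail e = r ∧ D.IsWalk (D.head e) v es

/-- `es` is a directed path from `r` to `v` using only edges of `F`. -/
def IsPathIn (D : Digraph' V E) (F : Set E) (r v : V) (es : List E) : Prop :=
  D.IsWalk r v es ∧ (∀ e ∈ es, e ∈ F) ∧ (r :: es.map D.head).Nodup

/-- The members of a list of paths are pairwise edge-disjoint. -/
def EdgeDisjoint (P : List (List E)) : Prop :=
  P.Pairwise (fun p q => ∀ e, e ∈ p → e ∉ q)

/-- The maximum number of pairwise edge-disjoint `r → v` paths inside `F`. -/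
noncomputable def lam (D : Digraph' V E) (F : Set E) (r v : V) : ℕ :=
  sSup {k | ∃ P : List (List E), P.length = k ∧ (∀ p ∈ P, D.IsPathIn F r v p) ∧
    EdgeDisjoint P}

/-- The set of edges of `F` whose head is `v`. -/
def inEdges (D : Digraph' V E) (F : Set E) (v : V) : Set E := {e ∈ F | D.head e = v}

/-- The in-degree of `v` in the subgraph `F`. -/
noncomputable def indeg (D : Digraph' V E) (F : Set E) (v : V) : ℕ :=
  (D.inEdges F v).ncard

/-- `I` arises as the set of last edges of a system of pairwise edge-disjoint
`r → v` paths in `F` (membership in the gammoid `G_F(v)`). -/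
def InGammoid (D : Digraph' V E) (F : Set E) (r v : V) (I : Set E) : Prop :=
  ∃ P : List (List E), (∀ p ∈ P, D.IsPathIn F r v p) ∧ EdgeDisjoint P ∧
    I = {e | ∃ p ∈ P, p.getLast? = some e}

/-- `F` is an `r`-flame: the in-degree of each `v ≠ r` equals λ_F(r,v). -/
def IsFlame (D : Digraph' V E) (r : V) (F : Set E) : Prop :=
  ∀ v, v ≠ r → D.indeg F v = D.lam F r v

/-- Total of `x` on the in-edges of `v`. -/
noncomputable def inflow (D : Digraph' V E) (x : E → ℝ) (v : V) : ℝ :=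
  ∑ e, if D.head e = v then x e else 0

/-- Total of `x` on the out-edges of `v`. -/
noncomputable def outflow (D : Digraph' V E) (x : E → ℝ) (v : V) : ℝ :=
  ∑ e, if D.tail e = v then x e else 0

/-- Total of `x` on the edges entering the vertex set `W`. -/
noncomputable def rhoSet (D : Digraph' V E) (x : E → ℝ) (W : Set V) : ℝ :=
  ∑ e, if D.head e ∈ W ∧ D.tail e ∉ W then x e else 0

/-- `x` is a (nonnegative) `r → v` flow. -/
def IsFlow (D : Digraph' V E) (r v : V) (x : E → ℝ) : Prop :=
  (∀ e, 0 ≤ x e) ∧ (∀ u, u ≠ r → u ≠ v → D.inflow x u = D.outflow x u) ∧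
    D.inflow x r = 0 ∧ D.outflow x v = 0

/-- The flow-connectivity from `r` to `v` under capacity `c`. -/
noncomputable def lamF (D : Digraph' V E) (r v : V) (c : E → ℝ) : ℝ :=
  sSup {a | ∃ x, D.IsFlow r v x ∧ x ≤ c ∧ D.outflow x r = a}

/-- Characteristic vector of an edge. -/
noncomputable def chi (e : E) : E → ℝ := fun e' => if e' = e then 1 else 0

/-- Restriction of `x` to the in-edges of `v` (zero elsewhere). -/
noncomputable def restrictIn (D : Digraph' V E) (v : V) (x : E → ℝ) : E → ℝ :=
  fun e => if D.head e = v then x e else 0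

/-- The polygammoid `G_c(v)`: restrictions to the in-edges of `v`
of `r → v` flows bounded by `c`. -/
def polygammoid (D : Digraph' V E) (r v : V) (c : E → ℝ) : Set (E → ℝ) :=
  {s | ∃ x, D.IsFlow r v x ∧ x ≤ c ∧ D.restrictIn v x = s}

/-- `D` has no parallel edges. -/
def NoParallel (D : Digraph' V E) : Prop :=
  ∀ e e', D.tail e = D.tail e' → D.head e = D.head e' → e = e'

/-- `es` is a directed cycle. -/
def IsCycle (D : Digraph' V E) (es : List E) : Prop :=
  es ≠ [] ∧ ∃ u, D.IsWalk u u es ∧ (es.map D.head).Nodup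

/-- Characteristic vector of a list of edges. -/
noncomputable def charVec (es : List E) : E → ℝ :=
  fun e => ((es.filter (fun e' => e' = e)).length : ℝ)

end Digraph'


namespace Digraph'

variable {V E : Type} [Fintype V] [Fintype E]

set_option linter.unusedSectionVars false
set_option linter.unnecessarySeqFocus false

theorem isWalk_append (D : Digraph' V E) {u v : V} {l₁ l₂ : List E} :
    D.IsWalk u v (l₁ ++ l₂) ↔ ∃ w, D.IsWalk u w l₁ ∧ D.IsWalk w v l₂ := by
  induction l₁ generalizing u with
  | nil => simp [IsWalk]
  | cons e l ih =>
    constructor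
    · rintro ⟨hte, hw⟩
      obtain ⟨w, h1, h2⟩ := ih.mp hw
      exact ⟨w, ⟨hte, h1⟩, h2⟩
    · rintro ⟨w, ⟨hte, h1⟩, h2⟩
      exact ⟨hte, ih.mpr ⟨w, h1, h2⟩⟩

/-- number of edges in `l` with head `u` -/
noncomputable def cntH (D : Digraph' V E) (l : List E) (u : V) : ℕ :=
  (l.filter (fun e => D.head e = u)).length

/-- number of edges in `l` with tail `u` -/
noncomputable def cntT (D : Digraph' V E) (l : List E) (u : V) : ℕ :=
  (l.filter (fun e => D.tail e = u)).length

theorem cntH_cons (D : Digraph' V E) (e : E) (l : List E) (u : V) :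
    D.cntH (e :: l) u = (if D.head e = u then 1 else 0) + D.cntH l u := by
  simp only [cntH, List.filter_cons]
  split <;> simp_all <;> omega

theorem cntT_cons (D : Digraph' V E) (e : E) (l : List E) (u : V) :
    D.cntT (e :: l) u = (if D.tail e = u then 1 else 0) + D.cntT l u := by
  simp only [cntT, List.filter_cons]
  split <;> simp_all <;> omega

/-- balance equation for an arbitrary walk -/
theorem walk_balance (D : Digraph' V E) {a b : V} {es : List E} (h : D.IsWalk a b es) (u : V) :
    D.cntT es u + (if u = b then 1 else 0) = D.cntH es u + (if u = a then 1 else 0) := by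
  induction es generalizing a with
  | nil => cases h; rfl
  | cons e l ih =>
    obtain ⟨hte, hw⟩ := h
    have := ih hw
    rw [cntT_cons, cntH_cons, hte]
    have h1 : (if D.head e = u then (1:ℕ) else 0) = (if u = D.head e then 1 else 0) := by
      simp [eq_comm]
    have h2 : (if a = u then (1:ℕ) else 0) = (if u = a then 1 else 0) := by
      simp [eq_comm]
    omega

theorem isWalk_nil (D : Digraph' V E) (v : V) : D.IsWalk v v [] := rfl

/-- any walk contains a path with the same endpoints, using a subset of the edges -/
theorem walkToPathAux (D : Digraph' V E) : ∀ (n : ℕ) (es : List E), es.length ≤ n →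
    ∀ (u v : V), D.IsWalk u v es →
    ∃ es' : List E, D.IsWalk u v es' ∧ (∀ e ∈ es', e ∈ es) ∧
      (u :: es'.map D.head).Nodup := by
  intro n
  induction n with
  | zero =>
    intro es hes u v hw
    rw [List.length_eq_zero_iff.mp (Nat.le_zero.mp hes)] at hw ⊢
    exact ⟨[], hw, by simp, by simp⟩
  | succ n ih =>
    intro es hes u v hw
    by_cases hu : u ∈ es.map D.head
    · -- split the walk at the first return to a vertex equal to u
      obtain ⟨e, he, hhe⟩ := List.exists_of_mem_map hu
      obtain ⟨l₁, l₂, rfl⟩ := List.append_of_mem he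
      have := (D.isWalk_append (l₁ := l₁ ++ [e]) (l₂ := l₂)).mp (by simpa using hw)
      obtain ⟨w, hw1, hw2⟩ := this
      have hwend : w = u := by
        obtain ⟨w', hw1', hw2'⟩ := (D.isWalk_append (l₁ := l₁) (l₂ := [e])).mp hw1
        obtain ⟨ht, hh⟩ := hw2'
        cases hh; exact hhe
      rw [hwend] at hw2
      have hlen : l₂.length ≤ n := by
        have := hes; simp only [List.length_append, List.length_cons] at this; omega
      obtain ⟨es', h1, h2, h3⟩ := ih l₂ hlen u v hw2
      exact ⟨es', h1, fun x hx => by simp [h2 x hx], h3⟩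
    · cases es with
      | nil => exact ⟨[], hw, by simp, by simp⟩
      | cons e l =>
        obtain ⟨hte, hwl⟩ := hw
        have hln : l.length ≤ n := by simp only [List.length_cons] at hes; omega
        obtain ⟨es', h1, h2, h3⟩ := ih l hln (D.head e) v hwl
        refine ⟨e :: es', ⟨hte, h1⟩, ?_, ?_⟩
        · intro x hx
          simp only [List.mem_cons] at hx ⊢
          rcases hx with rfl | hx
          · exact Or.inl rfl
          · exact Or.inr (h2 x hx)
        · simp only [List.map_cons, List.nodup_cons] at h3 ⊢
          refine ⟨?_, h3⟩
          simp only [List.mem_cons, not_or]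
          constructor
          · intro hcon
            exact hu (by rw [hcon]; simp)
          · intro hcon
            obtain ⟨x, hx1, hx2⟩ := List.exists_of_mem_map hcon
            exact hu (List.mem_map.mpr ⟨x, by simp [h2 x hx1], hx2⟩)

theorem walkToPath (D : Digraph' V E) {es : List E} {u v : V} (hw : D.IsWalk u v es) :
    ∃ es' : List E, D.IsWalk u v es' ∧ (∀ e ∈ es', e ∈ es) ∧
      (u :: es'.map D.head).Nodup :=
  D.walkToPathAux es.length es le_rfl u v hw

/-- a walk from outside `W` to inside `W` contains an edge entering `W` -/
theorem walk_crossing (D : Digraph' V E) {W : Set V} : ∀ {es : List E} {u v : V},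
    D.IsWalk u v es → u ∉ W → v ∈ W → ∃ e ∈ es, D.head e ∈ W ∧ D.tail e ∉ W := by
  intro es
  induction es with
  | nil => intro u v h hu hv; cases h; exact absurd hv hu
  | cons e l ih =>
    intro u v h hu hv
    obtain ⟨hte, hw⟩ := h
    by_cases hh : D.head e ∈ W
    · exact ⟨e, by simp, hh, hte ▸ hu⟩
    · obtain ⟨e', h1, h2, h3⟩ := ih hw hh hv
      exact ⟨e', by simp [h1], h2, h3⟩

theorem path_edges_nodup {u : V} {es : List E} (D : Digraph' V E)
    (h : (u :: es.map D.head).Nodup) : es.Nodup :=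
  ((List.nodup_cons.mp h).2).of_map _


theorem edgeDisjoint_flatMap_nodup : ∀ {P : List (List E)}, EdgeDisjoint P →
    (∀ p ∈ P, p.Nodup) → (P.flatMap id).Nodup := by
  intro P
  induction P with
  | nil => simp
  | cons p P ih =>
    intro hd hn
    rw [List.flatMap_cons, List.nodup_append]
    obtain ⟨h1, h2⟩ := List.pairwise_cons.mp hd
    refine ⟨hn p (by simp), ih h2 (fun q hq => hn q (by simp [hq])), ?_⟩
    intro e he hcon hcon' hee
    obtain ⟨q, hq, heq⟩ := List.mem_flatMap.mp hcon'
    subst hee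
    exact h1 q hq e he heq

theorem length_filter_flatMap (q : E → Prop) : ∀ (P : List (List E)),
    ((P.flatMap id).filter (fun e => q e)).length
      = (P.map (fun p => (p.filter (fun e => q e)).length)).sum := by
  intro P
  induction P with
  | nil => simp
  | cons p P ih =>
    simp only [List.flatMap_cons, List.filter_append, List.length_append, ih, List.map_cons,
      List.sum_cons, id]

/-- key counting lemma: an edge-disjoint path system each of whose members meets
a set `S` has at most `S.ncard` members. -/
theorem length_le_ncard_of_meets {P : List (List E)} {S : Set E}
    (hd : EdgeDisjoint P) (hn : ∀ p ∈ P, p.Nodup)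
    (hm : ∀ p ∈ P, ∃ e ∈ p, e ∈ S) : P.length ≤ S.ncard := by
  classical
  set L := P.flatMap id with hL
  have hLnd : L.Nodup := edgeDisjoint_flatMap_nodup hd hn
  set Lf := L.filter (fun e => e ∈ S) with hLf
  have h1 : P.length ≤ Lf.length := by
    rw [hLf, hL, length_filter_flatMap (fun e => e ∈ S) P]
    calc P.length = (P.map (fun _ => 1)).sum := by simp
      _ ≤ _ := by
          apply List.sum_le_sum
          intro p hp
          obtain ⟨e, he, heS⟩ := hm p hp
          have : e ∈ p.filter (fun e => e ∈ S) := List.mem_filter.mpr ⟨he, by simpa⟩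
          have := List.length_pos_iff.mpr (List.ne_nil_of_mem this)
          omega
  have h2 : Lf.length ≤ S.ncard := by
    have hnd : Lf.Nodup := hLnd.filter _
    have : Lf.toFinset.card = Lf.length := List.toFinset_card_of_nodup hnd
    rw [← this, Set.ncard_eq_toFinset_card' S]
    apply Finset.card_le_card
    intro e he
    simp only [List.mem_toFinset, hLf, List.mem_filter] at he
    simpa using (of_decide_eq_true he.2 : e ∈ S)
  omega

/-- the edges of `F` entering the vertex set `W` -/
def cutE (D : Digraph' V E) (F : Set E) (W : Set V) : Set E :=
  {e | e ∈ F ∧ D.head e ∈ W ∧ D.tail e ∉ W}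

variable {D : Digraph' V E}

theorem path_meets_cut {F : Set E} {W : Set V} {r v : V} {p : List E}
    (hp : D.IsPathIn F r v p) (hr : r ∉ W) (hv : v ∈ W) :
    ∃ e ∈ p, e ∈ D.cutE F W := by
  obtain ⟨hw, hF, _⟩ := hp
  obtain ⟨e, he, h1, h2⟩ := D.walk_crossing hw hr hv
  exact ⟨e, he, hF e he, h1, h2⟩

theorem system_le_cut {F : Set E} {W : Set V} {r v : V} {P : List (List E)}
    (hP : ∀ p ∈ P, D.IsPathIn F r v p) (hd : EdgeDisjoint P)
    (hr : r ∉ W) (hv : v ∈ W) : P.length ≤ (D.cutE F W).ncard :=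
  length_le_ncard_of_meets hd (fun p hp => D.path_edges_nodup (hP p hp).2.2)
    (fun p hp => path_meets_cut (hP p hp) hr hv)

theorem lam_bddAbove {F : Set E} {r v : V} (hv : v ≠ r) :
    BddAbove {k | ∃ P : List (List E), P.length = k ∧ (∀ p ∈ P, D.IsPathIn F r v p) ∧
      EdgeDisjoint P} := by
  refine ⟨(D.cutE F {v}).ncard, ?_⟩
  rintro k ⟨P, rfl, hP, hd⟩
  exact system_le_cut hP hd (by simpa using hv.symm) rfl

theorem lam_spec {F : Set E} {r v : V} (hv : v ≠ r) :
    ∃ P : List (List E), P.length = D.lam F r v ∧ (∀ p ∈ P, D.IsPathIn F r v p) ∧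
      EdgeDisjoint P := by
  have h0 : (0:ℕ) ∈ {k | ∃ P : List (List E), P.length = k ∧
      (∀ p ∈ P, D.IsPathIn F r v p) ∧ EdgeDisjoint P} := ⟨[], by simp [EdgeDisjoint]⟩
  exact Nat.sSup_mem ⟨0, h0⟩ (lam_bddAbove hv)

theorem lam_ge {F : Set E} {r v : V} (hv : v ≠ r) {P : List (List E)}
    (hP : ∀ p ∈ P, D.IsPathIn F r v p) (hd : EdgeDisjoint P) :
    P.length ≤ D.lam F r v :=
  le_csSup (lam_bddAbove hv) ⟨P, rfl, hP, hd⟩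

theorem lam_mono {F F' : Set E} {r v : V} (hv : v ≠ r) (hFF : F ⊆ F') :
    D.lam F r v ≤ D.lam F' r v := by
  obtain ⟨P, hlen, hP, hd⟩ := lam_spec (D := D) (F := F) (r := r) hv
  rw [← hlen]
  exact lam_ge hv (fun p hp => ⟨(hP p hp).1, fun e he => hFF ((hP p hp).2.1 e he),
    (hP p hp).2.2⟩) hd

theorem lam_le_cut {F : Set E} {W : Set V} {r v : V} (hr : r ∉ W) (hv : v ∈ W) :
    D.lam F r v ≤ (D.cutE F W).ncard := by
  have hvr : v ≠ r := fun h => hr (h ▸ hv)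
  obtain ⟨P, hlen, hP, hd⟩ := lam_spec (D := D) (F := F) (r := r) hvr
  rw [← hlen]
  exact system_le_cut hP hd hr hv

theorem cut_subset_inEdges {F : Set E} {v : V} : D.cutE F {v} ⊆ D.inEdges F v :=
  fun e he => ⟨he.1, he.2.1⟩

theorem lam_le_indeg {F : Set E} {r v : V} (hv : v ≠ r) :
    D.lam F r v ≤ D.indeg F v := by
  refine le_trans (lam_le_cut (W := {v}) (by simpa using hv.symm) rfl) ?_
  exact Set.ncard_le_ncard cut_subset_inEdges (Set.toFinite _)

theorem cut_mono {F F' : Set E} {W : Set V} (h : F ⊆ F') :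
    (D.cutE F W).ncard ≤ (D.cutE F' W).ncard :=
  Set.ncard_le_ncard (fun e he => ⟨h he.1, he.2⟩) (Set.toFinite _)

theorem cut_as_sum (F : Set E) (W : Set V) :
    (D.cutE F W).ncard = ∑ e : E, if e ∈ F ∧ D.head e ∈ W ∧ D.tail e ∉ W then 1 else 0 := by
  classical
  rw [Set.ncard_eq_toFinset_card']
  rw [← Finset.card_filter]
  congr 1
  ext e
  simp only [Set.mem_toFinset, Finset.mem_filter, Finset.mem_univ, true_and]
  constructor
  · intro h; exact h
  · intro h; exact h

theorem cut_submodular (F : Set E) (A B : Set V) :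
    (D.cutE F (A ∪ B)).ncard + (D.cutE F (A ∩ B)).ncard
      ≤ (D.cutE F A).ncard + (D.cutE F B).ncard := by
  classical
  rw [cut_as_sum, cut_as_sum, cut_as_sum, cut_as_sum, ← Finset.sum_add_distrib,
    ← Finset.sum_add_distrib]
  apply Finset.sum_le_sum
  intro e _
  by_cases hF : e ∈ F <;>
  by_cases h1 : D.head e ∈ A <;>
  by_cases h2 : D.head e ∈ B <;>
  by_cases h3 : D.tail e ∈ A <;>
  by_cases h4 : D.tail e ∈ B <;>
  simp [Set.mem_union, Set.mem_inter_iff, hF, h1, h2, h3, h4]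


/-- in-degree of `u` in a finite edge set -/
noncomputable def finH (D : Digraph' V E) (S : Finset E) (u : V) : ℕ :=
  ∑ e ∈ S, if D.head e = u then 1 else 0

/-- out-degree of `u` in a finite edge set -/
noncomputable def finT (D : Digraph' V E) (S : Finset E) (u : V) : ℕ :=
  ∑ e ∈ S, if D.tail e = u then 1 else 0

theorem finH_erase {S : Finset E} {e : E} (he : e ∈ S) (u : V) :
    D.finH S u = D.finH (S.erase e) u + (if D.head e = u then 1 else 0) := by
  rw [finH, finH, ← Finset.add_sum_erase _ _ he]; omega

theorem finT_erase {S : Finset E} {e : E} (he : e ∈ S) (u : V) :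
    D.finT S u = D.finT (S.erase e) u + (if D.tail e = u then 1 else 0) := by
  rw [finT, finT, ← Finset.add_sum_erase _ _ he]; omega

theorem finH_sdiff {S T : Finset E} (h : T ⊆ S) (u : V) :
    D.finH S u = D.finH (S \ T) u + D.finH T u :=
  (Finset.sum_sdiff h).symm

theorem finT_sdiff {S T : Finset E} (h : T ⊆ S) (u : V) :
    D.finT S u = D.finT (S \ T) u + D.finT T u :=
  (Finset.sum_sdiff h).symm

theorem finH_toFinset {l : List E} (hl : l.Nodup) (u : V) :
    D.finH l.toFinset u = D.cntH l u := by
  induction l with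
  | nil => simp [finH, cntH]
  | cons e l ih =>
    rw [List.toFinset_cons, cntH_cons]
    obtain ⟨h1, h2⟩ := List.nodup_cons.mp hl
    rw [finH, Finset.sum_insert (by simpa using h1), ← finH, ih h2]

theorem finT_toFinset {l : List E} (hl : l.Nodup) (u : V) :
    D.finT l.toFinset u = D.cntT l u := by
  induction l with
  | nil => simp [finT, cntT]
  | cons e l ih =>
    rw [List.toFinset_cons, cntT_cons]
    obtain ⟨h1, h2⟩ := List.nodup_cons.mp hl
    rw [finT, Finset.sum_insert (by simpa using h1), ← finT, ih h2]

theorem cntH_eq_zero {r : V} (hr : ∀ e : E, D.head e ≠ r) (l : List E) :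
    D.cntH l r = 0 := by
  induction l with
  | nil => rfl
  | cons e l ih => rw [cntH_cons, ih, if_neg (hr e)]

theorem finT_pos_elt {S : Finset E} {x : V} (h : 1 ≤ D.finT S x) :
    ∃ e ∈ S, D.tail e = x := by
  by_contra hcon
  push_neg at hcon
  have : D.finT S x = 0 := by
    rw [finT]
    apply Finset.sum_eq_zero
    intro e he
    rw [if_neg (hcon e he)]
  omega

/-- extraction of a trail (edge-nodup walk) towards `v` in a near-balanced edge set -/
theorem trail_extract {r v : V} (hr : ∀ e : E, D.head e ≠ r) (hvr : v ≠ r) :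
    ∀ (n : ℕ) (S : Finset E), S.card ≤ n → ∀ x : V,
    (∀ u, u ≠ r → u ≠ v → u ≠ x → D.finT S u = D.finH S u) →
    (x ≠ r → x ≠ v → D.finT S x = D.finH S x + 1) →
    (x = r → 1 ≤ D.finT S r) →
    (x = r → x ≠ v) →
    ∃ es : List E, D.IsWalk x v es ∧ es.Nodup ∧ ∀ e ∈ es, e ∈ S := by
  intro n
  induction n with
  | zero =>
    intro S hS x hbal hx hxr hxv
    have hS0 : S = ∅ := Finset.card_eq_zero.mp (Nat.le_zero.mp hS)
    subst hS0
    have hx0 : D.finT ∅ x = 0 := by simp [finT]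
    have hh0 : D.finH ∅ x = 0 := by simp [finH]
    by_cases hxv' : x = v
    · exact ⟨[], hxv', by simp, by simp⟩
    · by_cases hxr' : x = r
      · have := hxr hxr'; rw [hxr'] at hx0; omega
      · have := hx hxr' hxv'; omega
  | succ n ih =>
    intro S hS x hbal hx hxr hxv
    by_cases hxv' : x = v
    · exact ⟨[], hxv', by simp, by simp⟩
    · have hpos : 1 ≤ D.finT S x := by
        by_cases hxr' : x = r
        · exact hxr' ▸ hxr hxr'
        · rw [hx hxr' hxv']; omega
      obtain ⟨e, he, hte⟩ := finT_pos_elt hpos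
      set S' := S.erase e with hS'
      have hcard : S'.card ≤ n := by
        rw [hS', Finset.card_erase_of_mem he]; omega
      set x' := D.head e with hx'e
      have hx'r : x' ≠ r := hr e
      have eqT : ∀ u, D.finT S u = D.finT S' u + (if D.tail e = u then 1 else 0) :=
        fun u => finT_erase he u
      have eqH : ∀ u, D.finH S u = D.finH S' u + (if D.head e = u then 1 else 0) :=
        fun u => finH_erase he u
      obtain ⟨es', hw', hnd', hm'⟩ := ih S' hcard x'
        (by
          intro u hu1 hu2 hu3
          have h1 := eqT u; have h2 := eqH u
          rw [if_neg (fun hcon : D.head e = u => hu3 (by rw [hx'e, hcon]))] at h2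
          by_cases hux : u = x
          · subst hux
            rw [if_pos hte] at h1
            have := hx hu1 hu2
            omega
          · rw [if_neg (fun hcon : D.tail e = u => hux (by rw [← hcon, hte]))] at h1
            have := hbal u hu1 hu2 hux
            omega)
        (by
          intro h1' h2'
          have h1 := eqT x'; have h2 := eqH x'
          rw [if_pos (by rw [hx'e])] at h2
          by_cases hxx : x' = x
          · -- self-loop
            have htex : D.tail e = x' := by rw [hxx, hte]
            rw [if_pos htex] at h1
            have hxnr : x ≠ r := by rw [← hxx]; exact h1'
            have hxnv : x ≠ v := hxv'
            have := hx hxnr hxnv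
            rw [hxx] at h1 h2 ⊢
            omega
          · rw [if_neg (fun hcon : D.tail e = x' => hxx (by rw [← hcon, hte]))] at h1
            have := hbal x' h1' h2' hxx
            omega)
        (fun hcon => absurd hcon hx'r)
        (fun hcon => absurd hcon hx'r)
      refine ⟨e :: es', ⟨hte, hw'⟩, ?_, ?_⟩
      · rw [List.nodup_cons]
        exact ⟨fun hcon => (Finset.notMem_erase e S) (hm' e hcon), hnd'⟩
      · intro f hf
        rcases List.mem_cons.mp hf with rfl | hf
        · exact he
        · exact Finset.erase_subset e S (hm' f hf)

/-- decomposition of a balanced edge set into edge-disjoint paths -/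
theorem decompose {r v : V} (hr : ∀ e : E, D.head e ≠ r) (hvr : v ≠ r) :
    ∀ (n : ℕ) (A : Finset E),
    (∀ u, u ≠ r → u ≠ v → D.finT A u = D.finH A u) → D.finT A r = n →
    ∃ P : List (List E), P.length = n ∧
      (∀ p ∈ P, D.IsWalk r v p ∧ (∀ e ∈ p, e ∈ A) ∧ (r :: p.map D.head).Nodup) ∧
      EdgeDisjoint P := by
  intro n
  induction n with
  | zero => intro A _ _; exact ⟨[], rfl, by simp, by simp [EdgeDisjoint]⟩
  | succ n ih =>
    intro A hbal hdeg
    obtain ⟨es, hwes, hndes, hmes⟩ := D.trail_extract hr hvr A.card A le_rfl r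
      (fun u h1 h2 _ => hbal u h1 h2)
      (fun h1 _ => absurd rfl h1)
      (fun _ => by omega)
      (fun _ h => hvr h.symm)
    obtain ⟨es₁, hw₁, hsub₁, hnd₁⟩ := D.walkToPath hwes
    set A' := A \ es.toFinset with hA'
    have hesA : es.toFinset ⊆ A := fun e he => hmes e (List.mem_toFinset.mp he)
    have eqT : ∀ u, D.finT A u = D.finT A' u + D.cntT es u := by
      intro u
      rw [hA', finT_sdiff hesA u, finT_toFinset hndes]
    have eqH : ∀ u, D.finH A u = D.finH A' u + D.cntH es u := by
      intro u
      rw [hA', finH_sdiff hesA u, finH_toFinset hndes]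
    have hwb := D.walk_balance hwes
    have hbal' : ∀ u, u ≠ r → u ≠ v → D.finT A' u = D.finH A' u := by
      intro u h1 h2
      have b := hwb u
      rw [if_neg h2, if_neg h1] at b
      have := hbal u h1 h2
      have := eqT u; have := eqH u
      omega
    have hdeg' : D.finT A' r = n := by
      have b := hwb r
      rw [if_neg (fun h : r = v => hvr h.symm), if_pos rfl] at b
      have h0 : D.cntH es r = 0 := cntH_eq_zero hr es
      have := eqT r
      omega
    obtain ⟨P, hlen, hP, hd⟩ := ih A' hbal' hdeg'
    refine ⟨es₁ :: P, by simp [hlen], ?_, ?_⟩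
    · intro p hp
      rcases List.mem_cons.mp hp with rfl | hp
      · exact ⟨hw₁, fun e he => hmes e (hsub₁ e he), hnd₁⟩
      · obtain ⟨a, b, c⟩ := hP p hp
        exact ⟨a, fun e he => Finset.sdiff_subset (b e he), c⟩
    · rw [EdgeDisjoint, List.pairwise_cons]
      refine ⟨?_, hd⟩
      intro p hp e he hcon
      have heA' := (hP p hp).2.1 e hcon
      rw [hA', Finset.mem_sdiff] at heA'
      exact heA'.2 (List.mem_toFinset.mpr (hsub₁ e he))


theorem cntT_append (D : Digraph' V E) (l₁ l₂ : List E) (u : V) :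
    D.cntT (l₁ ++ l₂) u = D.cntT l₁ u + D.cntT l₂ u := by
  simp [cntT, List.filter_append]

theorem cntH_append (D : Digraph' V E) (l₁ l₂ : List E) (u : V) :
    D.cntH (l₁ ++ l₂) u = D.cntH l₁ u + D.cntH l₂ u := by
  simp [cntH, List.filter_append]

theorem system_balance {r v : V} : ∀ {P : List (List E)}, (∀ p ∈ P, D.IsWalk r v p) →
    ∀ u, D.cntT (P.flatMap id) u + P.length * (if u = v then 1 else 0)
      = D.cntH (P.flatMap id) u + P.length * (if u = r then 1 else 0) := by
  intro P
  induction P with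
  | nil => intro _ u; simp [cntT, cntH]
  | cons p P ih =>
    intro hP u
    have hb := D.walk_balance (hP p (by simp)) u
    have hi := ih (fun q hq => hP q (by simp [hq])) u
    rw [List.flatMap_cons, cntT_append, cntH_append, id]
    simp only [List.length_cons]
    by_cases h1 : u = v <;> by_cases h2 : u = r <;>
      simp only [h1, h2, if_true, if_false, ite_true, ite_false, if_pos, if_neg,
        not_false_iff, Nat.succ_mul, Nat.mul_one, Nat.mul_zero] at hb hi ⊢ <;>
      omega

theorem finH_eq_zero {r : V} (hr : ∀ e : E, D.head e ≠ r) (S : Finset E) :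
    D.finH S r = 0 :=
  Finset.sum_eq_zero (fun e _ => if_neg (hr e))

theorem filter_length_mono {q q' : E → Prop} (l : List E) (h : ∀ e, q e → q' e) :
    (l.filter (fun e => q e)).length ≤ (l.filter (fun e => q' e)).length :=
  List.Sublist.length_le (List.monotone_filter_right l
    (fun a ha => decide_eq_true (h a (of_decide_eq_true ha))))

theorem sum_le_length {f : List E → ℕ} : ∀ (P : List (List E)), (∀ p ∈ P, f p ≤ 1) →
    (P.map f).sum ≤ P.length := by
  intro P
  induction P with
  | nil => simp
  | cons p P ih =>
    intro h
    have h1 := h p (by simp)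
    have h2 := ih (fun q hq => h q (by simp [hq]))
    simp only [List.map_cons, List.sum_cons, List.length_cons]
    omega

theorem ncard_le_filter_length {S : Set E} {L : List E} (hnd : L.Nodup)
    (h : ∀ e ∈ S, e ∈ L) : S.ncard ≤ (L.filter (fun e => e ∈ S)).length := by
  classical
  have hnd' : (L.filter (fun e => e ∈ S)).Nodup := hnd.filter _
  rw [← List.toFinset_card_of_nodup hnd', Set.ncard_eq_toFinset_card' S]
  apply Finset.card_le_card
  intro e he
  simp only [Set.mem_toFinset] at he
  simp only [List.mem_toFinset, List.mem_filter]
  exact ⟨h e he, by simpa⟩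

/-- the residual digraph of `D`: a forward and a backward copy of each edge -/
def resid (D : Digraph' V E) : Digraph' V (E ⊕ E) :=
  ⟨Sum.elim D.tail D.head, Sum.elim D.head D.tail⟩

def fwOf (ρ : List (E ⊕ E)) : List E := ρ.filterMap (Sum.elim some (fun _ => none))

def bkOf (ρ : List (E ⊕ E)) : List E := ρ.filterMap (Sum.elim (fun _ => none) some)

theorem mem_fwOf {ρ : List (E ⊕ E)} {e : E} : e ∈ fwOf ρ ↔ Sum.inl e ∈ ρ := by
  rw [fwOf, List.mem_filterMap]
  constructor
  · rintro ⟨a, ha, hae⟩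
    cases a with
    | inl x => simp only [Sum.elim_inl, Option.some_inj] at hae; exact hae ▸ ha
    | inr x => simp at hae
  · intro h; exact ⟨Sum.inl e, h, rfl⟩

theorem mem_bkOf {ρ : List (E ⊕ E)} {e : E} : e ∈ bkOf ρ ↔ Sum.inr e ∈ ρ := by
  rw [bkOf, List.mem_filterMap]
  constructor
  · rintro ⟨a, ha, hae⟩
    cases a with
    | inr x => simp only [Sum.elim_inr, Option.some_inj] at hae; exact hae ▸ ha
    | inl x => simp at hae
  · intro h; exact ⟨Sum.inr e, h, rfl⟩

theorem nodup_fwOf {ρ : List (E ⊕ E)} (h : ρ.Nodup) : (fwOf ρ).Nodup := by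
  apply h.filterMap
  intro a b e ha hb
  cases a <;> cases b <;> simp_all

theorem nodup_bkOf {ρ : List (E ⊕ E)} (h : ρ.Nodup) : (bkOf ρ).Nodup := by
  apply h.filterMap
  intro a b e ha hb
  cases a <;> cases b <;> simp_all

theorem resid_cntT (D : Digraph' V E) : ∀ (ρ : List (E ⊕ E)) (u : V),
    D.resid.cntT ρ u = D.cntT (fwOf ρ) u + D.cntH (bkOf ρ) u := by
  intro ρ
  induction ρ with
  | nil => intro u; rfl
  | cons s ρ ih =>
    intro u
    cases s with
    | inl e =>
      have h1 : fwOf (Sum.inl e :: ρ) = e :: fwOf ρ := by simp [fwOf]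
      have h2 : bkOf (Sum.inl e :: ρ) = bkOf ρ := rfl
      rw [cntT_cons, h1, h2, cntT_cons, ih]
      simp only [resid, Sum.elim_inl]
      grind
    | inr e =>
      have h1 : fwOf (Sum.inr e :: ρ) = fwOf ρ := rfl
      have h2 : bkOf (Sum.inr e :: ρ) = e :: bkOf ρ := by simp [bkOf]
      rw [cntT_cons, h1, h2, cntH_cons, ih]
      simp only [resid, Sum.elim_inr]
      grind

theorem resid_cntH (D : Digraph' V E) : ∀ (ρ : List (E ⊕ E)) (u : V),
    D.resid.cntH ρ u = D.cntH (fwOf ρ) u + D.cntT (bkOf ρ) u := by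
  intro ρ
  induction ρ with
  | nil => intro u; rfl
  | cons s ρ ih =>
    intro u
    cases s with
    | inl e =>
      have h1 : fwOf (Sum.inl e :: ρ) = e :: fwOf ρ := by simp [fwOf]
      have h2 : bkOf (Sum.inl e :: ρ) = bkOf ρ := rfl
      rw [cntH_cons, h1, h2, cntH_cons, ih]
      simp only [resid, Sum.elim_inl]
      grind
    | inr e =>
      have h1 : fwOf (Sum.inr e :: ρ) = fwOf ρ := rfl
      have h2 : bkOf (Sum.inr e :: ρ) = e :: bkOf ρ := by simp [bkOf]
      rw [cntH_cons, h1, h2, cntT_cons, ih]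
      simp only [resid, Sum.elim_inr]
      grind


theorem walk_stay_out {R : Set V} {q : E → Prop}
    (hq : ∀ e, q e → D.tail e ∈ R ∧ D.head e ∉ R) :
    ∀ {es : List E} {a b : V}, D.IsWalk a b es → a ∉ R →
    (∀ e ∈ es, D.head e ∈ R → D.tail e ∈ R) →
    (es.filter (fun e => q e)).length = 0 := by
  intro es
  induction es with
  | nil => intro a b _ _ _; rfl
  | cons e l ih =>
    intro a b hw ha hprop
    obtain ⟨hte, hwl⟩ := hw
    have htout : D.tail e ∉ R := hte ▸ ha
    have hhout : D.head e ∉ R := fun hc => htout (hprop e (by simp) hc)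
    have hnq : ¬ q e := fun h => htout (hq e h).1
    rw [List.filter_cons_of_neg (by simpa using hnq)]
    exact ih hwl hhout (fun f hf => hprop f (by simp [hf]))

theorem walk_cross_once {R : Set V} {q : E → Prop}
    (hq : ∀ e, q e → D.tail e ∈ R ∧ D.head e ∉ R) :
    ∀ {es : List E} {a b : V}, D.IsWalk a b es → a ∈ R →
    (∀ e ∈ es, D.head e ∈ R → D.tail e ∈ R) →
    (es.filter (fun e => q e)).length ≤ 1 := by
  intro es
  induction es with
  | nil => intro a b _ _ _; simp
  | cons e l ih =>
    intro a b hw ha hprop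
    obtain ⟨hte, hwl⟩ := hw
    by_cases hh : D.head e ∈ R
    · have hnq : ¬ q e := fun h => (hq e h).2 hh
      rw [List.filter_cons_of_neg (by simpa using hnq)]
      exact ih hwl hh (fun f hf => hprop f (by simp [hf]))
    · have h0 := D.walk_stay_out hq hwl hh (fun f hf => hprop f (by simp [hf]))
      by_cases hqe : q e
      · rw [List.filter_cons_of_pos (by simpa using hqe)]
        simp only [List.length_cons, h0]
        omega
      · rw [List.filter_cons_of_neg (by simpa using hqe)]
        omega

/-- hard direction of Menger's theorem: there is a cut of size `lam` -/
theorem menger_hard {F : Set E} {r v : V} (hr : ∀ e : E, D.head e ≠ r) (hvr : v ≠ r) :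
    ∃ W : Set V, v ∈ W ∧ r ∉ W ∧ (D.cutE F W).ncard ≤ D.lam F r v := by
  classical
  obtain ⟨P, hlen, hP, hd⟩ := lam_spec (D := D) (F := F) (r := r) hvr
  set n := D.lam F r v with hn
  set PE : Set E := {e | ∃ p ∈ P, e ∈ p} with hPE
  set L : List E := P.flatMap id with hL
  have hmemL : ∀ e, e ∈ L ↔ e ∈ PE := by
    intro e; rw [hL, List.mem_flatMap]; simp [hPE]
  have hLnd : L.Nodup :=
    edgeDisjoint_flatMap_nodup hd (fun p hp => path_edges_nodup D (hP p hp).2.2)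
  have hPEF : ∀ e ∈ PE, e ∈ F := by
    rintro e ⟨p, hp, hep⟩
    exact (hP p hp).2.1 e hep
  set F' : Set (E ⊕ E) :=
    {s | Sum.elim (fun e => e ∈ F ∧ e ∉ PE) (fun e => e ∈ PE) s} with hF'
  set R : Set V := {x | ∃ l, D.resid.IsWalk r x l ∧ ∀ s ∈ l, s ∈ F'} with hR
  have hrR : r ∈ R := ⟨[], rfl, by simp⟩
  have hfwd : ∀ e, e ∈ F → e ∉ PE → D.tail e ∈ R → D.head e ∈ R := by
    rintro e heF hePE ⟨l, hw, hm⟩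
    refine ⟨l ++ [Sum.inl e], ?_, ?_⟩
    · exact (D.resid.isWalk_append).mpr ⟨D.tail e, hw, ⟨rfl, rfl⟩⟩
    · intro s hs
      rcases List.mem_append.mp hs with hs | hs
      · exact hm s hs
      · rw [List.mem_singleton.mp hs]
        exact ⟨heF, hePE⟩
  have hbwd : ∀ e, e ∈ PE → D.head e ∈ R → D.tail e ∈ R := by
    rintro e hePE ⟨l, hw, hm⟩
    refine ⟨l ++ [Sum.inr e], ?_, ?_⟩
    · exact (D.resid.isWalk_append).mpr ⟨D.head e, hw, ⟨rfl, rfl⟩⟩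
    · intro s hs
      rcases List.mem_append.mp hs with hs | hs
      · exact hm s hs
      · rw [List.mem_singleton.mp hs]
        exact hePE
  have hvR : v ∉ R := by
    rintro ⟨l, hw, hm⟩
    obtain ⟨ρ, hwρ, hsubρ, hndρhead⟩ := D.resid.walkToPath hw
    have hρF' : ∀ s ∈ ρ, s ∈ F' := fun s hs => hm s (hsubρ s hs)
    have hndρ : ρ.Nodup := path_edges_nodup D.resid hndρhead
    have hfwnd : (fwOf ρ).Nodup := nodup_fwOf hndρ
    have hbknd : (bkOf ρ).Nodup := nodup_bkOf hndρ
    have hfwP : ∀ e ∈ fwOf ρ, e ∈ F ∧ e ∉ PE := fun e he => hρF' _ (mem_fwOf.mp he)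
    have hbkP : ∀ e ∈ bkOf ρ, e ∈ PE := fun e he => hρF' _ (mem_bkOf.mp he)
    set PEf : Finset E := L.toFinset with hPEf
    have hPEfmem : ∀ e, e ∈ PEf ↔ e ∈ PE := by
      intro e; rw [hPEf, List.mem_toFinset]; exact hmemL e
    have hbksub : (bkOf ρ).toFinset ⊆ PEf := by
      intro e he
      exact (hPEfmem e).mpr (hbkP e (List.mem_toFinset.mp he))
    have hdisj : Disjoint (PEf \ (bkOf ρ).toFinset) (fwOf ρ).toFinset := by
      rw [Finset.disjoint_right]
      intro e he hc
      have := (hfwP e (List.mem_toFinset.mp he)).2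
      exact this ((hPEfmem e).mp (Finset.mem_sdiff.mp hc).1)
    set A : Finset E := (PEf \ (bkOf ρ).toFinset) ∪ (fwOf ρ).toFinset with hA
    have idT : ∀ u, D.finT A u + D.cntT (bkOf ρ) u = D.finT PEf u + D.cntT (fwOf ρ) u := by
      intro u
      have h1 : D.finT A u
          = D.finT (PEf \ (bkOf ρ).toFinset) u + D.finT (fwOf ρ).toFinset u := by
        rw [hA, finT, finT, finT, Finset.sum_union hdisj]
      have h2 := finT_sdiff (D := D) hbksub u
      rw [finT_toFinset hfwnd] at h1; rw [finT_toFinset hbknd] at h2; omega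
    have idH : ∀ u, D.finH A u + D.cntH (bkOf ρ) u = D.finH PEf u + D.cntH (fwOf ρ) u := by
      intro u
      have h1 : D.finH A u
          = D.finH (PEf \ (bkOf ρ).toFinset) u + D.finH (fwOf ρ).toFinset u := by
        rw [hA, finH, finH, finH, Finset.sum_union hdisj]
      have h2 := finH_sdiff (D := D) hbksub u
      rw [finH_toFinset hfwnd] at h1; rw [finH_toFinset hbknd] at h2; omega
    have sysbal := system_balance (D := D) (fun p hp => (hP p hp).1)
    have resbal : ∀ u, D.cntT (fwOf ρ) u + D.cntH (bkOf ρ) u + (if u = v then 1 else 0)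
        = D.cntH (fwOf ρ) u + D.cntT (bkOf ρ) u + (if u = r then 1 else 0) := by
      intro u
      have := D.resid.walk_balance hwρ u
      rw [resid_cntT, resid_cntH] at this
      omega
    have hPEfT : ∀ u, D.finT PEf u = D.cntT L u := fun u => finT_toFinset hLnd u
    have hPEfH : ∀ u, D.finH PEf u = D.cntH L u := fun u => finH_toFinset hLnd u
    have hbalA : ∀ u, u ≠ r → u ≠ v → D.finT A u = D.finH A u := by
      intro u h1 h2
      have a1 := idT u; have a2 := idH u
      have a3 := sysbal u
      rw [if_neg h2, if_neg h1, hlen, ← hPEfT, ← hPEfH] at a3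
      have a4 := resbal u
      rw [if_neg h2, if_neg h1] at a4
      omega
    have hdegA : D.finT A r = n + 1 := by
      have a1 := idT r; have a2 := idH r
      have a3 := sysbal r
      rw [if_neg (fun h : r = v => hvr h.symm), if_pos rfl, hlen, ← hPEfT, ← hPEfH] at a3
      have a4 := resbal r
      rw [if_neg (fun h : r = v => hvr h.symm), if_pos rfl] at a4
      have z1 : D.cntH (fwOf ρ) r = 0 := cntH_eq_zero hr _
      have z2 : D.cntH (bkOf ρ) r = 0 := cntH_eq_zero hr _
      have z3 : D.finH PEf r = 0 := finH_eq_zero hr _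
      omega
    obtain ⟨P₁, hlen₁, hP₁, hd₁⟩ := D.decompose hr hvr (n + 1) A hbalA hdegA
    have hub : n + 1 ≤ n := by
      rw [← hlen₁]
      apply lam_ge hvr ?_ hd₁
      intro p hp
      obtain ⟨a, b, c⟩ := hP₁ p hp
      refine ⟨a, ?_, c⟩
      intro e he
      rcases Finset.mem_union.mp (b e he) with hh | hh
      · exact hPEF e ((hPEfmem e).mp (Finset.mem_sdiff.mp hh).1)
      · exact (hfwP e (List.mem_toFinset.mp hh)).1
    omega
  refine ⟨Rᶜ, hvR, fun hc => hc hrR, ?_⟩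
  have hcutPE : ∀ e ∈ D.cutE F Rᶜ, e ∈ PE := by
    rintro e ⟨heF, hh, ht⟩
    by_contra hePE
    exact hh (hfwd e heF hePE (not_not.mp ht))
  have step1 : (D.cutE F Rᶜ).ncard
      ≤ (L.filter (fun e => e ∈ D.cutE F Rᶜ)).length :=
    ncard_le_filter_length hLnd (fun e he => (hmemL e).mpr (hcutPE e he))
  have step2 : (L.filter (fun e => e ∈ D.cutE F Rᶜ)).length
      = (P.map (fun p => (p.filter (fun e => e ∈ D.cutE F Rᶜ)).length)).sum :=
    length_filter_flatMap _ P
  have step3 : ∀ p ∈ P, (p.filter (fun e => e ∈ D.cutE F Rᶜ)).length ≤ 1 := by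
    intro p hp
    refine D.walk_cross_once (q := fun e => e ∈ D.cutE F Rᶜ)
      (by rintro e ⟨_, hh, ht⟩; exact ⟨not_not.mp ht, hh⟩) (hP p hp).1 hrR ?_
    intro e he
    exact hbwd e ⟨p, hp, he⟩
  calc (D.cutE F Rᶜ).ncard ≤ _ := step1
    _ = _ := step2
    _ ≤ P.length := sum_le_length P step3
    _ = n := hlen


theorem indeg_insert {F : Set E} {e : E} (he : e ∉ F) (u : V) :
    D.indeg (insert e F) u = D.indeg F u + (if D.head e = u then 1 else 0) := by
  by_cases h : D.head e = u
  · rw [if_pos h]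
    have heq : D.inEdges (insert e F) u = insert e (D.inEdges F u) := by
      ext f
      simp only [inEdges, Set.mem_insert_iff, Set.mem_setOf_eq, Set.mem_sep_iff]
      constructor
      · rintro ⟨rfl | hf, hh⟩
        · exact Or.inl rfl
        · exact Or.inr ⟨hf, hh⟩
      · rintro (rfl | ⟨hf, hh⟩)
        · exact ⟨Or.inl rfl, h⟩
        · exact ⟨Or.inr hf, hh⟩
    rw [indeg, heq, Set.ncard_insert_of_notMem (fun hc => he hc.1) (Set.toFinite _), indeg]
  · rw [if_neg h, indeg, indeg]
    congr 1
    ext f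
    simp only [inEdges, Set.mem_insert_iff, Set.mem_setOf_eq, Set.mem_sep_iff]
    constructor
    · rintro ⟨rfl | hf, hh⟩
      · exact absurd hh h
      · exact ⟨hf, hh⟩
    · rintro ⟨hf, hh⟩
      exact ⟨Or.inr hf, hh⟩

theorem indeg_finset (F : Finset E) (v : V) :
    D.indeg ↑F v = (F.filter (fun e => D.head e = v)).card := by
  rw [indeg]
  have heq : D.inEdges ↑F v = ↑(F.filter (fun e => D.head e = v)) := by
    ext f
    simp [inEdges]
  rw [heq, Set.ncard_coe_finset]

theorem exists_bigger_indeg {F₀ F₁ : Finset E} {r : V} (hr : ∀ e : E, D.head e ≠ r)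
    (hcard : F₀.card < F₁.card) : ∃ v, v ≠ r ∧ D.indeg ↑F₀ v < D.indeg ↑F₁ v := by
  by_contra hcon
  push_neg at hcon
  have hsum : ∀ F : Finset E, F.card = ∑ v : V, (F.filter (fun e => D.head e = v)).card :=
    fun F => Finset.card_eq_sum_card_fiberwise (fun e _ => Finset.mem_univ (D.head e))
  have hle : F₁.card ≤ F₀.card := by
    rw [hsum, hsum]
    apply Finset.sum_le_sum
    intro v _
    by_cases hv : v = r
    · have h0 : F₁.filter (fun e => D.head e = v) = ∅ :=
        Finset.filter_false_of_mem (fun e _ => hv ▸ hr e)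
      simp [h0]
    · rw [← indeg_finset, ← indeg_finset]
      exact hcon v hv
  omega

/-- key exchange lemma -/
theorem exchange_edge {F₀ F₁ : Finset E} {r : V} (hr : ∀ e : E, D.head e ≠ r)
    (h₀ : D.IsFlame r ↑F₀) (h₁ : D.IsFlame r ↑F₁) (hcard : F₀.card < F₁.card) :
    ∃ e ∈ F₁ \ F₀,
      D.indeg ↑F₀ (D.head e) + 1 ≤ D.lam (insert e ↑F₀) r (D.head e) := by
  classical
  obtain ⟨v₀, hv₀r, hv₀⟩ := exists_bigger_indeg (D := D) hr hcard
  by_contra hcon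
  push_neg at hcon
  -- the family of tight sets for v₀
  set T : Set (Set V) :=
    {W | v₀ ∈ W ∧ r ∉ W ∧ (D.cutE ↑F₀ W).ncard = D.indeg ↑F₀ v₀} with hT
  have hTne : T.Nonempty := by
    obtain ⟨W, hvW, hrW, hWle⟩ := D.menger_hard (F := ↑F₀) hr hv₀r
    refine ⟨W, hvW, hrW, le_antisymm ?_ ?_⟩
    · rw [h₀ v₀ hv₀r]; exact hWle
    · rw [h₀ v₀ hv₀r]; exact lam_le_cut hrW hvW
  -- a tight set of maximum cardinality
  have hSbdd : BddAbove (Set.ncard '' T) := by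
    refine ⟨Nat.card V, ?_⟩
    rintro k ⟨W, _, rfl⟩
    rw [← Set.ncard_univ]
    exact Set.ncard_le_ncard (Set.subset_univ W) Set.finite_univ
  have hSne : (Set.ncard '' T).Nonempty := hTne.image _
  obtain ⟨W, hWT, hWcard⟩ := Nat.sSup_mem hSne hSbdd
  have hWmax : ∀ W' ∈ T, W'.ncard ≤ W.ncard := by
    intro W' hW'
    rw [hWcard]
    exact le_csSup hSbdd ⟨W', hW', rfl⟩
  obtain ⟨hv₀W, hrW, hWtight⟩ := hWT
  -- no edge of F₁ crosses into W outside F₀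
  have hnocross : D.cutE ↑F₁ W ⊆ D.cutE ↑F₀ W := by
    rintro e ⟨heF₁, hhW, htW⟩
    by_cases heF₀ : e ∈ F₀
    · exact ⟨heF₀, hhW, htW⟩
    · exfalso
      have heD : e ∈ F₁ \ F₀ := Finset.mem_sdiff.mpr ⟨heF₁, heF₀⟩
      have hher : D.head e ≠ r := hr e
      have hlamle := hcon e heD
      -- a tight cut W_e for head e in insert e F₀
      obtain ⟨We, hheWe, hrWe, hWele⟩ :=
        D.menger_hard (F := insert e (↑F₀ : Set E)) hr hher
      have h1 : D.lam ↑F₀ r (D.head e) = D.indeg ↑F₀ (D.head e) :=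
        (h₀ (D.head e) hher).symm
      have h2 : (D.cutE ↑F₀ We).ncard ≤ (D.cutE (insert e ↑F₀) We).ncard :=
        cut_mono (Set.subset_insert e ↑F₀)
      have h3 : D.lam ↑F₀ r (D.head e) ≤ (D.cutE ↑F₀ We).ncard :=
        lam_le_cut hrWe hheWe
      have h4 : (D.cutE (insert e ↑F₀) We).ncard ≤ D.indeg ↑F₀ (D.head e) := by
        calc (D.cutE (insert e ↑F₀) We).ncard ≤ D.lam (insert e ↑F₀) r (D.head e) := hWele
          _ ≤ D.indeg ↑F₀ (D.head e) := by omega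
      -- hence all are equal and e does not cross We
      have heqcut : (D.cutE ↑F₀ We).ncard = (D.cutE (insert e ↑F₀) We).ncard := by omega
      have hWetight : (D.cutE ↑F₀ We).ncard = D.indeg ↑F₀ (D.head e) := by omega
      have hteWe : D.tail e ∈ We := by
        by_contra htc
        have hsub : insert e (D.cutE ↑F₀ We) ⊆ D.cutE (insert e ↑F₀) We := by
          intro f hf
          rcases Set.mem_insert_iff.mp hf with rfl | ⟨hf1, hf2, hf3⟩
          · exact ⟨Set.mem_insert f _, hheWe, htc⟩
          · exact ⟨Set.mem_insert_of_mem e hf1, hf2, hf3⟩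
        have hnotmem : e ∉ D.cutE ↑F₀ We := fun hc => heF₀ hc.1
        have := Set.ncard_le_ncard hsub (Set.toFinite _)
        rw [Set.ncard_insert_of_notMem hnotmem (Set.toFinite _)] at this
        omega
      -- submodularity forces We ⊆ W, contradicting tail e ∉ W
      have hsubmod := D.cut_submodular ↑F₀ W We
      have hu1 : D.indeg ↑F₀ v₀ ≤ (D.cutE ↑F₀ (W ∪ We)).ncard := by
        rw [h₀ v₀ hv₀r]
        exact lam_le_cut (fun hc => hc.elim hrW hrWe) (Or.inl hv₀W)
      have hu2 : D.indeg ↑F₀ (D.head e) ≤ (D.cutE ↑F₀ (W ∩ We)).ncard := by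
        rw [h₀ (D.head e) hher]
        exact lam_le_cut (fun hc => hrW hc.1) ⟨hhW, hheWe⟩
      have hUtight : (D.cutE ↑F₀ (W ∪ We)).ncard = D.indeg ↑F₀ v₀ := by omega
      have hUT : (W ∪ We) ∈ T :=
        ⟨Or.inl hv₀W, fun hc => hc.elim hrW hrWe, hUtight⟩
      have hWeq : W = W ∪ We :=
        Set.eq_of_subset_of_ncard_le (Set.subset_union_left)
          (hWmax _ hUT) (Set.toFinite _)
      have : D.tail e ∈ W := by
        rw [hWeq]
        exact Or.inr hteWe
      exact htW this
  -- contradiction with the flame property of F₁ at v₀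
  have hfinal : D.lam ↑F₁ r v₀ ≤ D.indeg ↑F₀ v₀ := by
    calc D.lam ↑F₁ r v₀ ≤ (D.cutE ↑F₁ W).ncard := lam_le_cut hrW hv₀W
      _ ≤ (D.cutE ↑F₀ W).ncard := Set.ncard_le_ncard hnocross (Set.toFinite _)
      _ = D.indeg ↑F₀ v₀ := hWtight
  rw [← h₁ v₀ hv₀r] at hfinal
  omega

end Digraph'

open Digraph' in
/-- The edge sets of `r`-flame subgraphs of `D` form a greedoid. -/
theorem stmt1 {V E : Type} [Fintype V] [Fintype E] (D : Digraph' V E) (r : V)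
    (hr : ∀ e, D.head e ≠ r) :
    D.IsFlame r (↑(∅ : Finset E)) ∧
    ∀ F₀ F₁ : Finset E, D.IsFlame r ↑F₀ → D.IsFlame r ↑F₁ →
      F₀.card < F₁.card →
      ∃ e ∈ F₁ \ F₀, D.IsFlame r ↑(insert e F₀) := by
  constructor
  · intro v hv
    have h1 : D.indeg (↑(∅ : Finset E)) v = 0 := by
      rw [indeg_finset]; simp
    have h2 : D.lam (↑(∅ : Finset E)) r v ≤ D.indeg (↑(∅ : Finset E)) v :=
      lam_le_indeg hv
    omega
  · intro F₀ F₁ h₀ h₁ hc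
    obtain ⟨e, heD, hlam⟩ := D.exchange_edge hr h₀ h₁ hc
    have heF₀ : e ∉ F₀ := (Finset.mem_sdiff.mp heD).2
    refine ⟨e, heD, ?_⟩
    intro w hw
    have hco : (↑(insert e F₀) : Set E) = insert e (↑F₀ : Set E) := Finset.coe_insert e F₀
    rw [hco]
    have hne : e ∉ (↑F₀ : Set E) := by simpa using heF₀
    have hind := D.indeg_insert hne w
    have hle := lam_le_indeg (D := D) (F := insert e (↑F₀ : Set E)) (r := r) hw
    by_cases hwu : D.head e = w
    · subst hwu
      rw [if_pos rfl] at hind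
      omega
    · rw [if_neg hwu] at hind
      have hmono := lam_mono (D := D) (F := (↑F₀ : Set E)) hw (Set.subset_insert e ↑F₀)
      have := h₀ w hw
      omega
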